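/- Let q_1, …, q_N ∈ ℝ and r_1, …, r_N ∈ ℝ³, fix i ∈ {1, …, N}, write r_{ij} = |r_i - r_j|, and define G(k) = Σ_{j=1}^{N} q_j · sinc(k r_{ij}) for k > 0, where sinc(t) = sin(t)/t for t ≠ 0 and sinc(0) = 1. Let w_ℓ > 0 and s_ℓ > 0 for ℓ = 0, …, M, let K > 0, and suppose B ≥ 0 satisfies |G(k)| ≤ B for all k ≥ K. Then |(1/(4√π)) Σ_{ℓ=0}^{M} w_ℓ s_ℓ³ ∫_K^∞ k² exp(-s_ℓ² k²/4) G(k) dk| ≤ (B/(2√π)) Σ_{ℓ=0}^{M} w_ℓ (√π + s_ℓ K) exp(-s_ℓ² K²/4). -/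

import Mathlib

open MeasureTheory Real Set Filter

/-- The (unnormalized) sinc function: `sinc t = sin t / t` for `t ≠ 0`, `sinc 0 = 1`. -/
noncomputable def sinc (t : ℝ) : ℝ := if t = 0 then 1 else Real.sin t / t

private lemma aux_integrable {a K : ℝ} (ha : 0 < a) (hK : 0 < K) :
    IntegrableOn (fun k : ℝ => k ^ 2 * Real.exp (-(a * k ^ 2))) (Set.Ioi K) := by
  have h := (integrableOn_rpow_mul_exp_neg_mul_sq ha (by norm_num : (-1:ℝ) < 2)).mono_set
    (Set.Ioi_subset_Ioi hK.le)
  refine h.congr_fun (fun x _ => ?_) measurableSet_Ioi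
  beta_reduce
  rw [show ((2:ℝ)) = ((2:ℕ):ℝ) by norm_num, Real.rpow_natCast, neg_mul]

private lemma tail_exp {a K : ℝ} (ha : 0 < a) (hK : 0 ≤ K) :
    ∫ k in Set.Ioi K, Real.exp (-(a * k ^ 2)) ≤
      Real.sqrt Real.pi / (2 * Real.sqrt a) * Real.exp (-(a * K ^ 2)) := by
  have hshift : Integrable (fun k : ℝ => Real.exp (-(a * (k - K) ^ 2))) := by
    have := (integrable_exp_neg_mul_sq ha).comp_sub_right K
    simpa [neg_mul] using this
  have hbig : IntegrableOn
      (fun k : ℝ => Real.exp (-(a * K ^ 2)) * Real.exp (-(a * (k - K) ^ 2))) (Set.Ioi K) :=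
    (hshift.const_mul _).integrableOn
  have h1 : ∫ k in Set.Ioi K, Real.exp (-(a * k ^ 2)) ≤
      ∫ k in Set.Ioi K, Real.exp (-(a * K ^ 2)) * Real.exp (-(a * (k - K) ^ 2)) := by
    refine setIntegral_mono_on ?_ hbig measurableSet_Ioi (fun k hk => ?_)
    · simpa [neg_mul] using (integrable_exp_neg_mul_sq ha).integrableOn
    · rw [← Real.exp_add]
      apply Real.exp_le_exp.2
      have hk' : K < k := hk
      nlinarith [mul_nonneg (mul_nonneg ha.le hK) (sub_nonneg.2 hk'.le)]
  have h2 : ∫ k in Set.Ioi K, Real.exp (-(a * (k - K) ^ 2)) =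
      ∫ t in Set.Ioi (0:ℝ), Real.exp (-(a * t ^ 2)) := by
    have := (measurePreserving_add_right (volume : Measure ℝ) K).setIntegral_preimage_emb
      (measurableEmbedding_addRight K)
      (fun k => Real.exp (-(a * (k - K) ^ 2))) (Set.Ioi K)
    simp only [add_sub_cancel_right] at this
    rw [← this]
    congr 1
    ext x
    simp [lt_sub_iff_add_lt]
  calc ∫ k in Set.Ioi K, Real.exp (-(a * k ^ 2))
      ≤ ∫ k in Set.Ioi K, Real.exp (-(a * K ^ 2)) * Real.exp (-(a * (k - K) ^ 2)) := h1
    _ = Real.exp (-(a * K ^ 2)) * ∫ k in Set.Ioi K, Real.exp (-(a * (k - K) ^ 2)) := by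
        rw [integral_const_mul]
    _ = Real.exp (-(a * K ^ 2)) * ∫ t in Set.Ioi (0:ℝ), Real.exp (-(a * t ^ 2)) := by rw [h2]
    _ = Real.exp (-(a * K ^ 2)) * (Real.sqrt (Real.pi / a) / 2) := by
        rw [show (fun t : ℝ => Real.exp (-(a * t ^ 2))) = fun t : ℝ => Real.exp (-a * t ^ 2) by
          funext t; congr 1; ring, integral_gaussian_Ioi]
    _ = Real.sqrt Real.pi / (2 * Real.sqrt a) * Real.exp (-(a * K ^ 2)) := by
        rw [Real.sqrt_div pi_pos.le]
        ring

private lemma ibp_gauss {a K : ℝ} (ha : 0 < a) (hK : 0 < K) :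
    ∫ k in Set.Ioi K, k ^ 2 * Real.exp (-(a * k ^ 2)) =
      K / (2 * a) * Real.exp (-(a * K ^ 2)) +
        (1 / (2 * a)) * ∫ k in Set.Ioi K, Real.exp (-(a * k ^ 2)) := by
  set f : ℝ → ℝ := fun k => -(k / (2 * a)) * Real.exp (-(a * k ^ 2)) with hf
  have hderiv : ∀ x ∈ Set.Ici K, HasDerivAt f
      (x ^ 2 * Real.exp (-(a * x ^ 2)) - (1 / (2 * a)) * Real.exp (-(a * x ^ 2))) x := by
    intro x _
    have h1 : HasDerivAt (fun x : ℝ => -(x / (2 * a))) (-(1 / (2 * a))) x :=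
      ((hasDerivAt_id x).div_const (2 * a)).neg
    have h2 : HasDerivAt (fun x : ℝ => Real.exp (-(a * x ^ 2)))
        (Real.exp (-(a * x ^ 2)) * (-(a * (2 * x)))) x := by
      have : HasDerivAt (fun x : ℝ => -(a * x ^ 2)) (-(a * (2 * x))) x := by
        simpa using (((hasDerivAt_pow 2 x).const_mul a).fun_neg)
      exact this.exp
    have := h1.mul h2
    refine this.congr_deriv ?_
    have h3 : a * a⁻¹ = 1 := mul_inv_cancel₀ ha.ne'
    linear_combination (x ^ 2 * Real.exp (-(a * x ^ 2))) * h3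
  have hint : IntegrableOn (fun x : ℝ =>
      x ^ 2 * Real.exp (-(a * x ^ 2)) - (1 / (2 * a)) * Real.exp (-(a * x ^ 2)))
      (Set.Ioi K) := by
    refine (aux_integrable ha hK).sub ?_
    have := ((integrable_exp_neg_mul_sq ha).const_mul (1 / (2 * a))).integrableOn
      (s := Set.Ioi K)
    simpa [neg_mul] using this
  have htend : Tendsto f atTop (nhds 0) := by
    have h0 : Tendsto (fun x : ℝ => Real.exp (-(1 / 2) * x)) atTop (nhds 0) := by
      apply Real.tendsto_exp_atBot.comp
      exact Tendsto.const_mul_atTop_of_neg (by norm_num) tendsto_id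
    have h1 : Tendsto (fun x : ℝ => x * Real.exp (-(a * x ^ 2))) atTop (nhds 0) := by
      have := (rpow_mul_exp_neg_mul_sq_isLittleO_exp_neg ha 1).trans_tendsto h0
      refine this.congr (fun x => ?_)
      rw [Real.rpow_one, neg_mul]
    have := h1.const_mul (-(1 / (2 * a)))
    rw [mul_zero] at this
    refine this.congr (fun x => ?_)
    simp only [hf]; ring
  have := integral_Ioi_of_hasDerivAt_of_tendsto' hderiv hint htend
  have hsub : ∫ x in Set.Ioi K,
      (x ^ 2 * Real.exp (-(a * x ^ 2)) - (1 / (2 * a)) * Real.exp (-(a * x ^ 2))) =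
      (∫ x in Set.Ioi K, x ^ 2 * Real.exp (-(a * x ^ 2))) -
        (1 / (2 * a)) * ∫ x in Set.Ioi K, Real.exp (-(a * x ^ 2)) := by
    have h2 : IntegrableOn (fun x : ℝ => 1 / (2 * a) * Real.exp (-(a * x ^ 2)))
        (Set.Ioi K) := by
      have := ((integrable_exp_neg_mul_sq ha).const_mul (1 / (2 * a))).integrableOn
        (s := Set.Ioi K)
      simpa [neg_mul] using this
    rw [integral_sub (aux_integrable ha hK) h2, integral_const_mul]
  rw [hsub] at this
  have hfK : f K = -(K / (2 * a)) * Real.exp (-(a * K ^ 2)) := rfl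
  rw [hfK] at this
  linarith

private lemma key_bound {a K : ℝ} (ha : 0 < a) (hK : 0 < K) :
    ∫ k in Set.Ioi K, k ^ 2 * Real.exp (-(a * k ^ 2)) ≤
      (K / (2 * a) + Real.sqrt Real.pi / (4 * a * Real.sqrt a)) * Real.exp (-(a * K ^ 2)) := by
  rw [ibp_gauss ha hK]
  have h := tail_exp ha hK.le
  have h2 : (1 / (2 * a)) * ∫ k in Set.Ioi K, Real.exp (-(a * k ^ 2)) ≤
      (1 / (2 * a)) * (Real.sqrt Real.pi / (2 * Real.sqrt a) * Real.exp (-(a * K ^ 2))) :=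
    mul_le_mul_of_nonneg_left h (by positivity)
  calc K / (2 * a) * Real.exp (-(a * K ^ 2)) +
        (1 / (2 * a)) * ∫ k in Set.Ioi K, Real.exp (-(a * k ^ 2))
      ≤ K / (2 * a) * Real.exp (-(a * K ^ 2)) +
        (1 / (2 * a)) * (Real.sqrt Real.pi / (2 * Real.sqrt a) * Real.exp (-(a * K ^ 2))) := by
        linarith
    _ = (K / (2 * a) + Real.sqrt Real.pi / (4 * a * Real.sqrt a)) * Real.exp (-(a * K ^ 2)) := by
        ring

/-- Explicit-constant, conditional form of the spectrum-truncation error estimate for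
the mid-range Fourier spectral solver: if `G(k) = Σ_j q_j sinc(k·|r_i - r_j|)` satisfies
`|G(k)| ≤ B` for `k ≥ K`, then
`|(1/(4√π)) Σ_ℓ w_ℓ s_ℓ³ ∫_K^∞ k² e^{-s_ℓ²k²/4} G(k) dk|
  ≤ (B/(2√π)) Σ_ℓ w_ℓ (√π + s_ℓ K) e^{-s_ℓ²K²/4}`. -/
theorem mid_range_spectrum_truncation_bound (N : ℕ) (q : Fin N → ℝ)
    (r : Fin N → EuclideanSpace ℝ (Fin 3)) (i : Fin N)
    (M : ℕ) (w s : ℕ → ℝ)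
    (hw : ∀ ℓ ∈ Finset.range (M + 1), 0 < w ℓ)
    (hs : ∀ ℓ ∈ Finset.range (M + 1), 0 < s ℓ)
    (K : ℝ) (hK : 0 < K) (B : ℝ) (hB : 0 ≤ B)
    (hG : ∀ k : ℝ, K ≤ k → |∑ j, q j * _root_.sinc (k * ‖r i - r j‖)| ≤ B) :
    |(1 / (4 * Real.sqrt Real.pi)) * ∑ ℓ ∈ Finset.range (M + 1), w ℓ * (s ℓ) ^ 3 *
        ∫ k in Set.Ioi K, k ^ 2 * Real.exp (-((s ℓ) ^ 2 * k ^ 2 / 4)) *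
          (∑ j, q j * _root_.sinc (k * ‖r i - r j‖))| ≤
      (B / (2 * Real.sqrt Real.pi)) * ∑ ℓ ∈ Finset.range (M + 1),
        w ℓ * (Real.sqrt Real.pi + s ℓ * K) * Real.exp (-((s ℓ) ^ 2 * K ^ 2 / 4)) := by
  have hπ : (0:ℝ) < Real.sqrt Real.pi := Real.sqrt_pos.2 Real.pi_pos
  set G : ℝ → ℝ := fun k => ∑ j, q j * _root_.sinc (k * ‖r i - r j‖) with hGdef
  -- term-wise bound
  have hterm : ∀ ℓ ∈ Finset.range (M + 1),
      |w ℓ * (s ℓ) ^ 3 * ∫ k in Set.Ioi K,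
          k ^ 2 * Real.exp (-((s ℓ) ^ 2 * k ^ 2 / 4)) * G k| ≤
        2 * B * (w ℓ * (Real.sqrt Real.pi + s ℓ * K) *
          Real.exp (-((s ℓ) ^ 2 * K ^ 2 / 4))) := by
    intro ℓ hℓ
    have hsℓ := hs ℓ hℓ
    have hwℓ := hw ℓ hℓ
    set a : ℝ := (s ℓ) ^ 2 / 4 with hadef
    have ha : 0 < a := by positivity
    have hexp : ∀ k : ℝ, Real.exp (-((s ℓ) ^ 2 * k ^ 2 / 4)) = Real.exp (-(a * k ^ 2)) := by
      intro k; congr 1; rw [hadef]; ring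
    -- bound the integral
    have hIb : |∫ k in Set.Ioi K, k ^ 2 * Real.exp (-((s ℓ) ^ 2 * k ^ 2 / 4)) * G k| ≤
        B * ((K / (2 * a) + Real.sqrt Real.pi / (4 * a * Real.sqrt a)) *
          Real.exp (-(a * K ^ 2))) := by
      have hmaj : Integrable (fun k : ℝ => B * (k ^ 2 * Real.exp (-(a * k ^ 2))))
          (volume.restrict (Set.Ioi K)) := (aux_integrable ha hK).const_mul B
      have hle : ‖∫ k in Set.Ioi K, k ^ 2 * Real.exp (-((s ℓ) ^ 2 * k ^ 2 / 4)) * G k‖ ≤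
          ∫ k in Set.Ioi K, B * (k ^ 2 * Real.exp (-(a * k ^ 2))) := by
        refine norm_integral_le_of_norm_le hmaj ?_
        filter_upwards [ae_restrict_mem measurableSet_Ioi] with k hk
        have hkK : K ≤ k := le_of_lt hk
        rw [Real.norm_eq_abs, hexp k, abs_mul, abs_of_nonneg (by positivity :
          (0:ℝ) ≤ k ^ 2 * Real.exp (-(a * k ^ 2)))]
        rw [mul_comm B]
        exact mul_le_mul_of_nonneg_left (hG k hkK) (by positivity)
      calc |∫ k in Set.Ioi K, k ^ 2 * Real.exp (-((s ℓ) ^ 2 * k ^ 2 / 4)) * G k|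
          ≤ ∫ k in Set.Ioi K, B * (k ^ 2 * Real.exp (-(a * k ^ 2))) := hle
        _ = B * ∫ k in Set.Ioi K, k ^ 2 * Real.exp (-(a * k ^ 2)) := integral_const_mul _ _
        _ ≤ B * ((K / (2 * a) + Real.sqrt Real.pi / (4 * a * Real.sqrt a)) *
            Real.exp (-(a * K ^ 2))) :=
          mul_le_mul_of_nonneg_left (key_bound ha hK) hB
    have hsqrta : Real.sqrt a = s ℓ / 2 := by
      rw [hadef, show (s ℓ) ^ 2 / 4 = (s ℓ / 2) ^ 2 by ring, Real.sqrt_sq (by positivity)]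
    rw [abs_mul, abs_of_nonneg (by positivity : (0:ℝ) ≤ w ℓ * (s ℓ) ^ 3)]
    calc w ℓ * (s ℓ) ^ 3 * |∫ k in Set.Ioi K,
            k ^ 2 * Real.exp (-((s ℓ) ^ 2 * k ^ 2 / 4)) * G k|
        ≤ w ℓ * (s ℓ) ^ 3 * (B * ((K / (2 * a) + Real.sqrt Real.pi / (4 * a * Real.sqrt a)) *
            Real.exp (-(a * K ^ 2)))) := mul_le_mul_of_nonneg_left hIb (by positivity)
      _ = 2 * B * (w ℓ * (Real.sqrt Real.pi + s ℓ * K) *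
          Real.exp (-((s ℓ) ^ 2 * K ^ 2 / 4))) := by
          rw [hexp K, hsqrta, hadef]
          field_simp
          ring
  -- assemble
  rw [abs_mul, abs_of_nonneg (by positivity : (0:ℝ) ≤ 1 / (4 * Real.sqrt Real.pi))]
  calc 1 / (4 * Real.sqrt Real.pi) * |∑ ℓ ∈ Finset.range (M + 1), w ℓ * (s ℓ) ^ 3 *
          ∫ k in Set.Ioi K, k ^ 2 * Real.exp (-((s ℓ) ^ 2 * k ^ 2 / 4)) * G k|
      ≤ 1 / (4 * Real.sqrt Real.pi) * ∑ ℓ ∈ Finset.range (M + 1),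
          |w ℓ * (s ℓ) ^ 3 * ∫ k in Set.Ioi K,
            k ^ 2 * Real.exp (-((s ℓ) ^ 2 * k ^ 2 / 4)) * G k| :=
        mul_le_mul_of_nonneg_left (Finset.abs_sum_le_sum_abs _ _) (by positivity)
    _ ≤ 1 / (4 * Real.sqrt Real.pi) * ∑ ℓ ∈ Finset.range (M + 1),
          2 * B * (w ℓ * (Real.sqrt Real.pi + s ℓ * K) *
            Real.exp (-((s ℓ) ^ 2 * K ^ 2 / 4))) :=
        mul_le_mul_of_nonneg_left (Finset.sum_le_sum hterm) (by positivity)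
    _ = (B / (2 * Real.sqrt Real.pi)) * ∑ ℓ ∈ Finset.range (M + 1),
          w ℓ * (Real.sqrt Real.pi + s ℓ * K) * Real.exp (-((s ℓ) ^ 2 * K ^ 2 / 4)) := by
        rw [Finset.mul_sum, Finset.mul_sum]
        refine Finset.sum_congr rfl (fun ℓ _ => ?_)
        field_simp
        ring
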